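/- Let H be a subgroup of index m in a group G, and let M be a free ℤH-module of rank at most m. Then the semidirect product M ⋊ H embeds as a subgroup of the restricted wreath product ℤ ≀ G. -/

import Mathlib

/-- Semidirect product `M ⋊ G` of a `G`-semimodule `M` (commutative monoid with
`G`-action by automorphisms) with the group `G`; multiplication is
`(m,g)(m',g') = (m + g • m', g * g')`. -/
abbrev Sd (M G : Type*) := M × G

instance Sd.monoid (M G : Type*) [AddCommMonoid M] [Group G] [DistribMulAction G M] :
    Monoid (Sd M G) where
  mul p q := (p.1 + p.2 • q.1, p.2 * q.2)
  one := ((0 : M), (1 : G))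
  mul_assoc p q r := by
    show ((p.1 + p.2 • q.1) + (p.2 * q.2) • r.1, (p.2 * q.2) * r.2) =
      (p.1 + p.2 • (q.1 + q.2 • r.1), p.2 * (q.2 * r.2))
    rw [smul_add, mul_smul, add_assoc, mul_assoc]
  one_mul p := by
    show ((0 : M) + (1 : G) • p.1, 1 * p.2) = p
    simp
  mul_one p := by
    show (p.1 + p.2 • (0 : M), p.2 * 1) = p
    simp

instance Sd.group (M G : Type*) [AddCommGroup M] [Group G] [DistribMulAction G M] :
    Group (Sd M G) :=
  { Sd.monoid M G with
    inv := fun p => (-(p.2⁻¹ • p.1), p.2⁻¹)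
    inv_mul_cancel := fun p => by
      show (-(p.2⁻¹ • p.1) + p.2⁻¹ • p.1, p.2⁻¹ * p.2) = ((0 : M), (1 : G))
      simp }

/-- The translation action of a group `G` on the underlying additive group
`G →₀ ℤ` of the group ring `ℤG`. -/
noncomputable def wreathAction (G : Type*) [Group G] : DistribMulAction G (G →₀ ℤ) where
  smul g f := Finsupp.mapDomain (g * ·) f
  one_smul f := by
    show Finsupp.mapDomain (1 * ·) f = f
    simp only [one_mul]
    exact Finsupp.mapDomain_id
  mul_smul g h f := by
    show Finsupp.mapDomain (g * h * ·) f
        = Finsupp.mapDomain (g * ·) (Finsupp.mapDomain (h * ·) f)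
    rw [← Finsupp.mapDomain_comp]
    congr 1
    funext x
    simp [Function.comp, mul_assoc]
  smul_zero g := Finsupp.mapDomain_zero
  smul_add g f₁ f₂ := Finsupp.mapDomain_add

/-- If `H` is a subgroup of index `m` in `G` and `M` is a free `ℤH`-module of
rank `k ≤ m`, then `M ⋊ H` embeds in the restricted wreath product
`ℤ ≀ G = (⨁_{g ∈ G} ℤ) ⋊ G`. -/
theorem stmt3 (G : Type*) [Group G] (H : Subgroup G) (m k : ℕ)
    (hm : H.index = m) (hk : k ≤ m)
    (M : Type*) [AddCommGroup M] [Module (MonoidAlgebra ℤ H) M]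
    (b : Module.Basis (Fin k) (MonoidAlgebra ℤ H) M) :
    letI : DistribMulAction H M := DistribMulAction.compHom M (MonoidAlgebra.of ℤ H)
    letI : DistribMulAction G (G →₀ ℤ) := wreathAction G
    ∃ φ : Sd M H →* Sd (G →₀ ℤ) G, Function.Injective φ := by
  classical
  letI : DistribMulAction H M := DistribMulAction.compHom M (MonoidAlgebra.of ℤ H)
  letI : DistribMulAction G (G →₀ ℤ) := wreathAction G
  set Q := Quotient (QuotientGroup.rightRel H) with hQ
  have hcard : Nat.card Q = m := by
    rw [← hm, Subgroup.index]
    exact Nat.card_congr (QuotientGroup.quotientRightRelEquivQuotientLeftRel H)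
  obtain ⟨ι, hι⟩ : ∃ ι : Fin k → Q, Function.Injective ι := by
    rcases Nat.eq_zero_or_pos k with rfl | hk0
    · exact ⟨Fin.elim0, fun i => i.elim0⟩
    · have hfin : Finite Q := Nat.finite_of_card_ne_zero (by omega)
      let e := Finite.equivFinOfCardEq hcard
      exact ⟨fun i => e.symm (Fin.castLE hk i), fun i j hij =>
        Fin.castLE_injective hk (e.symm.injective hij)⟩
  -- coset representatives and the embeddings H ↪ G onto right cosets
  set e : Fin k → H → G := fun i h => (h : G) * (ι i).out with he
  have hmk : ∀ i (h : H), Quotient.mk (QuotientGroup.rightRel H) (e i h) = ι i := by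
    intro i h
    have : Quotient.mk (QuotientGroup.rightRel H) (e i h)
        = Quotient.mk (QuotientGroup.rightRel H) (ι i).out := by
      exact Quotient.sound (QuotientGroup.rightRel_apply.mpr
        (by simp [he, mul_inv_rev, ← mul_assoc]))
    rw [this, Quotient.out_eq]
  have hinj : ∀ i, Function.Injective (e i) := by
    intro i h h' hh
    exact Subtype.coe_injective (mul_right_cancel hh)
  have hdisj : ∀ i j (h h' : H), e i h = e j h' → i = j := by
    intro i j h h' hij
    apply hι
    rw [← hmk i h, ← hmk j h', hij]
  -- the additive embedding (ℤH)^k → ℤG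
  set F : (Fin k →₀ MonoidAlgebra ℤ H) →+ (G →₀ ℤ) :=
    Finsupp.liftAddHom (fun i => (Finsupp.mapDomain.addMonoidHom (e i)).comp
      (MonoidAlgebra.coeffAddEquiv : MonoidAlgebra ℤ H ≃+ (H →₀ ℤ)).toAddMonoidHom) with hF
  have hFapply : ∀ c : Fin k →₀ MonoidAlgebra ℤ H,
      F c = c.sum fun i x => Finsupp.mapDomain (e i) x.coeff := by
    intro c
    rw [hF, Finsupp.liftAddHom_apply]
    rfl
  have hFsingle : ∀ j (y : MonoidAlgebra ℤ H),
      F (Finsupp.single j y) = Finsupp.mapDomain (e j) y.coeff := by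
    intro j y
    rw [hF, Finsupp.liftAddHom_apply_single]
    rfl
  have hFinj : Function.Injective F := by
    rw [injective_iff_map_eq_zero]
    intro c hc
    ext i a
    have hR := congrArg (Finsupp.comapDomain.addMonoidHom (hinj i)) hc
    rw [map_zero, hFapply, map_finsuppSum] at hR
    have key : ∀ j (x : MonoidAlgebra ℤ H),
        Finsupp.comapDomain.addMonoidHom (hinj i) (Finsupp.mapDomain (e j) x.coeff)
          = if j = i then x.coeff else 0 := by
      intro j x
      split_ifs with hji
      · subst hji
        ext a'
        show (Finsupp.mapDomain (e j) x.coeff) (e j a') = x.coeff a'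
        rw [Finsupp.mapDomain_apply (hinj j)]
      · ext a'
        show (Finsupp.mapDomain (e j) x.coeff) (e i a') = 0
        apply Finsupp.mapDomain_notin_range
        rintro ⟨a'', ha''⟩
        exact hji (hdisj j i a'' a' ha'')
    simp only [key] at hR
    rw [Finsupp.sum, Finset.sum_ite_eq' c.support i (fun j => (c j).coeff)] at hR
    split_ifs at hR with hmem
    · simp [hR]
    · rw [Finsupp.notMem_support_iff.mp hmem]; simp
  -- H-equivariance
  have hmulmap : ∀ (h : H) (x : MonoidAlgebra ℤ H),
      ((MonoidAlgebra.of ℤ H h) • x).coeff = Finsupp.mapDomain (fun a => h * a) x.coeff := by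
    intro h x
    rw [smul_eq_mul, show MonoidAlgebra.of ℤ H h = MonoidAlgebra.single h 1 from rfl]
    ext a
    rw [MonoidAlgebra.coeff_single_mul_apply x 1 h a, one_mul]
    rw [show (fun a : H => h * a) = ⇑(Equiv.mulLeft h) from rfl,
      Finsupp.mapDomain_equiv_apply]
    rfl
  have hcomm : ∀ (h : H) j (x : H →₀ ℤ),
      Finsupp.mapDomain (e j) (Finsupp.mapDomain (fun a => h * a) x)
        = Finsupp.mapDomain ((h : G) * ·) (Finsupp.mapDomain (e j) x) := by
    intro h j x
    rw [← Finsupp.mapDomain_comp, ← Finsupp.mapDomain_comp]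
    congr 1
    funext a
    show ((h * a : H) : G) * (ι j).out = (h : G) * ((a : G) * (ι j).out)
    push_cast
    rw [mul_assoc]
  have hFeq : ∀ (h : H) (c : Fin k →₀ MonoidAlgebra ℤ H),
      F ((MonoidAlgebra.of ℤ H h) • c) = Finsupp.mapDomain (((h : G)) * ·) (F c) := by
    intro h c
    induction c using Finsupp.induction with
    | zero => simp
    | single_add j x c' _ _ ih =>
      rw [smul_add, map_add, map_add, Finsupp.mapDomain_add, ih, Finsupp.smul_single,
        hFsingle, hFsingle, hmulmap, hcomm]
  -- the monoid homomorphism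
  refine ⟨{ toFun := fun p => (F (b.repr p.1), (p.2 : G)), map_one' := ?_, map_mul' := ?_ }, ?_⟩
  · show (F (b.repr (0 : M)), ((1 : H) : G)) = ((0 : G →₀ ℤ), (1 : G))
    simp
  · intro p q
    show (F (b.repr (p.1 + p.2 • q.1)), ((p.2 * q.2 : H) : G))
        = (F (b.repr p.1) + (p.2 : G) • F (b.repr q.1), (p.2 : G) * (q.2 : G))
    have h1 : p.2 • q.1 = (MonoidAlgebra.of ℤ H p.2) • q.1 := rfl
    have h2 : ((p.2 : G)) • F (b.repr q.1)
        = Finsupp.mapDomain ((p.2 : G) * ·) (F (b.repr q.1)) := rfl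
    rw [h1, h2, map_add, map_add, map_smul, hFeq]
    simp
  · intro p q hpq
    have h1 : F (b.repr p.1) = F (b.repr q.1) := congrArg Prod.fst hpq
    have h2 : (p.2 : G) = (q.2 : G) := congrArg Prod.snd hpq
    exact Prod.ext (b.repr.injective (hFinj h1)) (Subtype.coe_injective h2)
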